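/- Let R be an n×n real symmetric positive definite matrix, M : ℕ → ℝ a nonnegative function and x : ℕ → ℝⁿ a function, such that the series ∑_{i=0}^∞ M(i), ∑_{i=0}^∞ i·M(i), ∑_{i=0}^∞ i²·M(i), ∑_{i=0}^∞ M(i)x(i), ∑_{i=0}^∞ i·M(i)x(i) and ∑_{i=0}^∞ M(i)x(i)ᵀRx(i) are (absolutely) convergent. Set M₀ := ∑_{i=0}^∞ M(i), M₁ := ∑_{i=0}^∞ i·M(i), M₂ := ∑_{i=0}^∞ i²·M(i), and assume M₀ > 0 and M₂ − M₁²/M₀ > 0. Then ∑_{i=0}^∞ M(i) x(i)ᵀ R x(i) ≥ M₀⁻¹ (∑_{i=0}^∞ M(i)x(i))ᵀ R (∑_{i=0}^∞ M(i)x(i)) + (M₂ − M₁²/M₀)⁻¹ Π̃ᵀ R Π̃, where Π̃ := (M₁/M₀) ∑_{i=0}^∞ M(i)x(i) − ∑_{i=0}^∞ i·M(i)x(i). -/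

import Mathlib

open Matrix
set_option maxHeartbeats 1000000

/-- Corollary 3: extended Jensen summation inequality with the first-moment
auxiliary sequence. -/
theorem extended_jensen_summation_infinite_moments {n : ℕ}
    (R : Matrix (Fin n) (Fin n) ℝ) (hRsym : R.IsSymm) (hRpd : R.PosDef)
    (M : ℕ → ℝ) (x : ℕ → (Fin n → ℝ))
    (hMnonneg : ∀ i, 0 ≤ M i)
    (hM : Summable M)
    (hiM : Summable (fun i : ℕ => (i : ℝ) * M i))
    (hi2M : Summable (fun i : ℕ => (i : ℝ) ^ 2 * M i))
    (hMx : Summable (fun i : ℕ => M i • x i))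
    (hiMx : Summable (fun i : ℕ => ((i : ℝ) * M i) • x i))
    (hMxRx : Summable (fun i : ℕ => M i * (x i ⬝ᵥ R.mulVec (x i))))
    (M0 M1 M2 : ℝ)
    (hM0 : M0 = ∑' i : ℕ, M i)
    (hM1 : M1 = ∑' i : ℕ, (i : ℝ) * M i)
    (hM2 : M2 = ∑' i : ℕ, (i : ℝ) ^ 2 * M i)
    (hM0pos : 0 < M0)
    (hvar : 0 < M2 - M1 ^ 2 / M0)
    (Pi0 : Fin n → ℝ)
    (hPi0 : Pi0 = (M1 / M0) • (∑' i : ℕ, M i • x i) - ∑' i : ℕ, ((i : ℝ) * M i) • x i) :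
    ∑' i : ℕ, M i * (x i ⬝ᵥ R.mulVec (x i)) ≥
      M0⁻¹ * ((∑' i : ℕ, M i • x i) ⬝ᵥ R.mulVec (∑' i : ℕ, M i • x i)) +
      (M2 - M1 ^ 2 / M0)⁻¹ * (Pi0 ⬝ᵥ R.mulVec Pi0) := by
  classical
  have hM0ne : M0 ≠ 0 := ne_of_gt hM0pos
  set V : ℝ := M2 - M1 ^ 2 / M0 with hV
  have hVne : V ≠ 0 := ne_of_gt hvar
  set B : (Fin n → ℝ) → (Fin n → ℝ) → ℝ := fun u v => u ⬝ᵥ R.mulVec v with hBdef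
  -- symmetry of B
  have hBsymm : ∀ u v, B u v = B v u := by
    intro u v
    simp only [hBdef]
    rw [dotProduct_mulVec, ← hRsym, vecMul_transpose, dotProduct_comm, hRsym]
  -- nonnegativity
  have hBnonneg : ∀ u, 0 ≤ B u u := by
    intro u
    have := hRpd.posSemidef.dotProduct_mulVec_nonneg u
    simpa using this
  -- summability / tsum commuting with B in first argument
  have key : ∀ (w : Fin n → ℝ) (f : ℕ → (Fin n → ℝ)), Summable f →
      Summable (fun i => B (f i) w) ∧ (∑' i, B (f i) w) = B (∑' i, f i) w := by
    intro w f hf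
    let g : (Fin n → ℝ) →L[ℝ] ℝ :=
      LinearMap.toContinuousLinearMap
        { toFun := fun u => u ⬝ᵥ R.mulVec w
          map_add' := fun u v => add_dotProduct u v _
          map_smul' := fun r u => smul_dotProduct r u _ }
    have hg : ∀ u, g u = B u w := fun u => rfl
    refine ⟨?_, ?_⟩
    · have := hf.map g g.continuous
      exact this
    · have := (g.map_tsum hf).symm
      simpa [hg] using this
  -- abbreviations for the two vector sums
  set a : Fin n → ℝ := ∑' i : ℕ, M i • x i with ha
  set b : Fin n → ℝ := ∑' i : ℕ, ((i : ℝ) * M i) • x i with hb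
  set D : ℝ := M0 * V with hD
  have hDne : D ≠ 0 := mul_ne_zero hM0ne hVne
  set c : Fin n → ℝ := (M2 / D) • a + (-(M1 / D)) • b with hc
  set d : Fin n → ℝ := (-(M1 / D)) • a + (M0 / D) • b with hd
  obtain ⟨hs2, ht2⟩ := key c _ hMx
  obtain ⟨hs3, ht3⟩ := key d _ hiMx
  rw [← ha] at ht2
  rw [← hb] at ht3
  -- pointwise expansion
  have hpt : ∀ i : ℕ, M i * B (x i - (c + (i : ℝ) • d)) (x i - (c + (i : ℝ) • d))
      = (M i * B (x i) (x i)
          - (2 * B (M i • x i) c + 2 * B (((i : ℝ) * M i) • x i) d))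
        + (M i * B c c + ((i : ℝ) * M i) * (2 * B c d) + ((i : ℝ) ^ 2 * M i) * B d d) := by
    intro i
    have e1 := hBsymm c (x i)
    have e2 := hBsymm d (x i)
    have e3 := hBsymm d c
    simp only [hBdef] at e1 e2 e3 ⊢
    simp only [Matrix.mulVec_sub, Matrix.mulVec_add, Matrix.mulVec_smul,
      sub_dotProduct, dotProduct_sub, add_dotProduct,
      dotProduct_add, smul_dotProduct, dotProduct_smul,
      smul_eq_mul]
    rw [e1, e2, e3]
    ring
  -- summability of the pieces
  have hs1 : Summable (fun i : ℕ => M i * B (x i) (x i)) := hMxRx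
  have hs4 : Summable (fun i : ℕ => M i * B c c) := hM.mul_right _
  have hs5 : Summable (fun i : ℕ => ((i : ℝ) * M i) * (2 * B c d)) := hiM.mul_right _
  have hs6 : Summable (fun i : ℕ => ((i : ℝ) ^ 2 * M i) * B d d) := hi2M.mul_right _
  have hsL : Summable (fun i : ℕ => M i * B (x i) (x i)
      - (2 * B (M i • x i) c + 2 * B (((i : ℝ) * M i) • x i) d)) :=
    hs1.sub ((hs2.mul_left 2).add (hs3.mul_left 2))
  have hsR : Summable (fun i : ℕ => M i * B c c + ((i : ℝ) * M i) * (2 * B c d)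
      + ((i : ℝ) ^ 2 * M i) * B d d) := (hs4.add hs5).add hs6
  -- nonnegativity of the completed square
  have h0 : (0 : ℝ) ≤ ∑' i : ℕ, M i * B (x i - (c + (i : ℝ) • d)) (x i - (c + (i : ℝ) • d)) :=
    tsum_nonneg fun i => mul_nonneg (hMnonneg i) (hBnonneg _)
  have hsplit : (∑' i : ℕ, M i * B (x i - (c + (i : ℝ) • d)) (x i - (c + (i : ℝ) • d)))
      = ((∑' i : ℕ, M i * B (x i) (x i)) - (2 * B a c + 2 * B b d))
        + (M0 * B c c + M1 * (2 * B c d) + M2 * B d d) := by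
    rw [tsum_congr hpt, hsL.tsum_add hsR]
    congr 1
    · rw [hs1.tsum_sub ((hs2.mul_left 2).add (hs3.mul_left 2)),
        (hs2.mul_left 2).tsum_add (hs3.mul_left 2), tsum_mul_left, tsum_mul_left, ht2, ht3]
    · rw [(hs4.add hs5).tsum_add hs6, hs4.tsum_add hs5, tsum_mul_right, tsum_mul_right,
        tsum_mul_right, hM0, hM1, hM2]
  have hbound : (∑' i : ℕ, M i * B (x i) (x i))
      ≥ (2 * B a c + 2 * B b d) - (M0 * B c c + M1 * (2 * B c d) + M2 * B d d) := by
    rw [hsplit] at h0; linarith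
  -- bilinear expansions
  have e := hBsymm b a
  have hexp : ∀ s t s' t' : ℝ, B (s • a + t • b) (s' • a + t' • b)
      = (s * s') * B a a + (s * t' + t * s') * B a b + (t * t') * B b b := by
    intro s t s' t'
    simp only [hBdef] at e ⊢
    simp only [Matrix.mulVec_add, Matrix.mulVec_smul, add_dotProduct,
      dotProduct_add, smul_dotProduct, dotProduct_smul, smul_eq_mul]
    rw [e]; ring
  have hexpa : ∀ s' t' : ℝ, B a (s' • a + t' • b) = s' * B a a + t' * B a b := by
    intro s' t'
    simp only [hBdef] at e ⊢
    simp only [Matrix.mulVec_add, Matrix.mulVec_smul, dotProduct_add,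
      dotProduct_smul, smul_eq_mul]
  have hexpb : ∀ s' t' : ℝ, B b (s' • a + t' • b) = s' * B a b + t' * B b b := by
    intro s' t'
    simp only [hBdef] at e ⊢
    simp only [Matrix.mulVec_add, Matrix.mulVec_smul, dotProduct_add,
      dotProduct_smul, smul_eq_mul]
    rw [← e]
  have hPi0' : Pi0 = (M1 / M0) • a + (-1 : ℝ) • b := by
    rw [hPi0]; module
  have hgoal_eq : M0⁻¹ * B a a + V⁻¹ * B Pi0 Pi0
      = (2 * B a c + 2 * B b d) - (M0 * B c c + M1 * (2 * B c d) + M2 * B d d) := by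
    rw [hPi0', hc, hd, hexp, hexp, hexp, hexp, hexpa, hexpb]
    have hVD : D = M0 * M2 - M1 ^ 2 := by
      rw [hD, hV]; field_simp
    have h1 : M0 * M2 - M1 ^ 2 ≠ 0 := by rw [← hVD]; exact hDne
    have hV' : V = (M0 * M2 - M1 ^ 2) / M0 := by
      rw [hV]; field_simp
    rw [hV', hVD]
    generalize B a a = P
    generalize B a b = Q
    generalize B b b = S2
    clear_value B V D a b c d
    field_simp
    ring
  show (∑' i : ℕ, M i * B (x i) (x i)) ≥ M0⁻¹ * B a a + V⁻¹ * B Pi0 Pi0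
  rw [hgoal_eq]; exact hbound
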